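/- Let T ∈ {0,1}^{m×n} be a binary matrix, and define R_T ∈ {0,1}^{n×n} by (R_T)_{jk} = 0 if there exists i with T_{ik} = 0 and T_{ij} = 1, and (R_T)_{jk} = 1 otherwise; define R*_T ∈ {0,1}^{n×n} by (R*_T)_{jk} = 1 iff (R_T)_{jk} = (R_T)_{kj} = 1. Then for every symmetric binary matrix R ∈ {0,1}^{n×n} with R ≥ I_n, R = R^{n−1} (structural power), and TR^{n−1} ≤ T (structural product), the number of connected components of the graph G(R*_T) is at most the number of connected components of G(R); moreover, if R ≠ R*_T then G(R) has strictly more connected components than G(R*_T). -/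

import Mathlib

open Matrix

/-- Structural product of binary (Boolean) matrices:
`(sprod X Z) i j = true` iff `∃ k, X i k = true ∧ Z k j = true`. -/
def sprod {m n p : ℕ} (X : Matrix (Fin m) (Fin n) Bool) (Z : Matrix (Fin n) (Fin p) Bool) :
    Matrix (Fin m) (Fin p) Bool :=
  Matrix.of fun i j => decide (∃ k, X i k = true ∧ Z k j = true)

/-- Structural power of a binary matrix, with `spow R 0 = I`. -/
def spow {n : ℕ} (R : Matrix (Fin n) (Fin n) Bool) : ℕ → Matrix (Fin n) (Fin n) Bool
  | 0 => Matrix.of fun i j => decide (i = j)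
  | k + 1 => sprod (spow R k) R

/-- `Y` belongs to the sparsity subspace `Sparse(X)`. -/
def InSparse {m n : ℕ} (X : Matrix (Fin m) (Fin n) Bool) (Y : Matrix (Fin m) (Fin n) ℝ) : Prop :=
  ∀ i j, X i j = false → Y i j = 0

/-- The binary matrix encoding the sparsity pattern of a real matrix. -/
noncomputable def Struct {m n : ℕ} (Y : Matrix (Fin m) (Fin n) ℝ) : Matrix (Fin m) (Fin n) Bool :=
  Matrix.of fun i j => decide (Y i j ≠ 0)

/-- Entrywise order on binary matrices: `leB X X'` means `X ≤ X'`. -/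
def leB {m n : ℕ} (X X' : Matrix (Fin m) (Fin n) Bool) : Prop :=
  ∀ i j, X i j = true → X' i j = true

/-- The undirected graph `G(R)` on `n` vertices whose adjacency matrix is the
symmetric binary matrix `R` (self-loops are irrelevant for connectivity). -/
def graphOf {n : ℕ} (R : Matrix (Fin n) (Fin n) Bool) : SimpleGraph (Fin n) :=
  SimpleGraph.fromRel (fun i j => R i j = true)

lemma sprod_apply {m n p : ℕ} (X : Matrix (Fin m) (Fin n) Bool) (Z : Matrix (Fin n) (Fin p) Bool)
    (i j) : sprod X Z i j = true ↔ ∃ k, X i k = true ∧ Z k j = true := by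
  simp [sprod]

lemma sprod_assoc {a b c d : ℕ} (X : Matrix (Fin a) (Fin b) Bool) (Y : Matrix (Fin b) (Fin c) Bool)
    (Z : Matrix (Fin c) (Fin d) Bool) : sprod (sprod X Y) Z = sprod X (sprod Y Z) := by
  funext i j
  rw [Bool.eq_iff_iff, sprod_apply, sprod_apply]
  constructor
  · rintro ⟨k, hk, hz⟩
    rw [sprod_apply] at hk
    obtain ⟨l, hl, hy⟩ := hk
    exact ⟨l, hl, (sprod_apply _ _ _ _).2 ⟨k, hy, hz⟩⟩
  · rintro ⟨k, hk, hz⟩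
    rw [sprod_apply] at hz
    obtain ⟨l, hl, hy⟩ := hz
    exact ⟨l, (sprod_apply _ _ _ _).2 ⟨k, hk, hl⟩, hy⟩

lemma spow_succ' {n : ℕ} (R : Matrix (Fin n) (Fin n) Bool) (a : ℕ) :
    spow R (a + 1) = sprod R (spow R a) := by
  induction a with
  | zero =>
      funext i j
      rw [Bool.eq_iff_iff]
      simp [spow, sprod]
  | succ a ih =>
      show sprod (spow R (a+1)) R = sprod R (spow R (a+1))
      conv_lhs => rw [ih]
      rw [sprod_assoc]
      rfl

lemma spow_mono {n : ℕ} (R : Matrix (Fin n) (Fin n) Bool) (hrefl : ∀ i, R i i = true)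
    {a b : ℕ} (h : a ≤ b) {j k : Fin n} (hjk : spow R a j k = true) : spow R b j k = true := by
  induction b with
  | zero => exact (Nat.le_zero.1 h) ▸ hjk
  | succ b ih =>
      rcases Nat.lt_or_ge a (b+1) with hb | hb
      · have := ih (Nat.lt_succ_iff.1 hb)
        show sprod (spow R b) R j k = true
        exact (sprod_apply _ _ _ _).2 ⟨k, this, hrefl k⟩
      · have : a = b + 1 := le_antisymm h hb
        exact this ▸ hjk

lemma walk_spow {n : ℕ} (R : Matrix (Fin n) (Fin n) Bool) (hsym : ∀ i j, R i j = R j i)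
    {j k : Fin n} (p : (graphOf R).Walk j k) : spow R p.length j k = true := by
  induction p with
  | nil => simp [spow]
  | @cons u v w h p ih =>
      have hadj : R u v = true := by
        rw [graphOf, SimpleGraph.fromRel_adj] at h
        rcases h.2 with h' | h'
        · exact h'
        · rw [hsym]; exact h'
      rw [SimpleGraph.Walk.length_cons, spow_succ']
      exact (sprod_apply _ _ _ _).2 ⟨v, hadj, ih⟩

lemma reach_entry {n : ℕ} (R : Matrix (Fin n) (Fin n) Bool) (hsym : ∀ i j, R i j = R j i)
    (hrefl : ∀ i, R i i = true) (hpow : R = spow R (n - 1)) {j k : Fin n}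
    (h : (graphOf R).Reachable j k) : R j k = true := by
  obtain ⟨p⟩ := h
  have hp : (p.bypass).IsPath := SimpleGraph.Walk.bypass_isPath p
  have hlt : p.bypass.length < n := by
    have := hp.length_lt
    simpa using this
  have hle : p.bypass.length ≤ n - 1 := Nat.le_sub_one_of_lt hlt
  have := spow_mono R hrefl hle (walk_spow R hsym p.bypass)
  rw [hpow]; exact this

/-- Proposition 1, 1 ⇔ 2: among all symmetric binary
matrices `R ≥ Iₙ` with `R = R^{n-1}` and `T R^{n-1} ≤ T`, the matrix `R*_T`
produced by the two-step procedure minimizes the number of connected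
components of `G(·)`, strictly so unless `R = R*_T`. -/
theorem optimized_sparsity_minimizes_components {m n : ℕ}
    (T : Matrix (Fin m) (Fin n) Bool)
    (RT Rstar : Matrix (Fin n) (Fin n) Bool)
    (hRT : ∀ j k, RT j k = false ↔ ∃ i, T i k = false ∧ T i j = true)
    (hRstar : ∀ j k, Rstar j k = true ↔ (RT j k = true ∧ RT k j = true)) :
    ∀ R : Matrix (Fin n) (Fin n) Bool,
      (∀ i j, R i j = R j i) → (∀ i, R i i = true) →
      R = spow R (n - 1) →
      leB (sprod T (spow R (n - 1))) T →
      Nat.card ((graphOf Rstar).ConnectedComponent) ≤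
        Nat.card ((graphOf R).ConnectedComponent) ∧
      (R ≠ Rstar →
        Nat.card ((graphOf Rstar).ConnectedComponent) <
          Nat.card ((graphOf R).ConnectedComponent)) := by
  unfold leB
  classical
  intro R hsym hrefl hpow hle
  -- characterization of RT
  have hRT' : ∀ j k, RT j k = true ↔ (∀ i, T i j = true → T i k = true) := by
    intro j k
    constructor
    · intro h i hij
      by_contra hik
      rw [Bool.not_eq_true] at hik
      have : RT j k = false := (hRT j k).2 ⟨i, hik, hij⟩
      rw [h] at this; exact Bool.noConfusion this
    · intro h
      by_contra hf
      rw [Bool.not_eq_true] at hf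
      obtain ⟨i, hik, hij⟩ := (hRT j k).1 hf
      rw [h i hij] at hik; exact Bool.noConfusion hik
  -- R ≤ Rstar
  have hRle : ∀ j k, R j k = true → Rstar j k = true := by
    intro j k hjk
    have key : ∀ a b : Fin n, R a b = true → (∀ i, T i a = true → T i b = true) := by
      intro a b hab i hia
      apply hle i b
      rw [sprod_apply]
      exact ⟨a, hia, by rw [← hpow]; exact hab⟩
    rw [hRstar]
    exact ⟨(hRT' j k).2 (key j k hjk), (hRT' k j).2 (key k j (by rw [hsym]; exact hjk))⟩
  have hSrefl : ∀ j, Rstar j j = true := fun j =>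
    (hRstar j j).2 ⟨(hRT' j j).2 fun _ h => h, (hRT' j j).2 fun _ h => h⟩
  have hStrans : ∀ {a b c}, Rstar a b = true → Rstar b c = true → Rstar a c = true := by
    intro a b c h1 h2
    obtain ⟨h1a, h1b⟩ := (hRstar a b).1 h1
    obtain ⟨h2a, h2b⟩ := (hRstar b c).1 h2
    exact (hRstar a c).2 ⟨(hRT' a c).2 fun i h => (hRT' b c).1 h2a i (((hRT' a b).1 h1a) i h),
      (hRT' c a).2 fun i h => (hRT' b a).1 h1b i (((hRT' c b).1 h2b) i h)⟩
  have hSsym : ∀ {a b}, Rstar a b = true → Rstar b a = true := by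
    intro a b h
    obtain ⟨h1, h2⟩ := (hRstar a b).1 h
    exact (hRstar b a).2 ⟨h2, h1⟩
  -- reachability in graphOf Rstar gives entry
  have hreachS : ∀ {j k : Fin n}, (graphOf Rstar).Reachable j k → Rstar j k = true := by
    intro j k h
    obtain ⟨p⟩ := h
    induction p with
    | nil => exact hSrefl _
    | @cons u v w h p ih =>
        have huv : Rstar u v = true := by
          rw [graphOf, SimpleGraph.fromRel_adj] at h
          rcases h.2 with h' | h'
          · exact h'
          · exact hSsym h'
        exact hStrans huv ih
  -- the graph inclusion and induced component map
  have hle2 : graphOf R ≤ graphOf Rstar := by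
    intro a b hab
    rw [graphOf, SimpleGraph.fromRel_adj] at hab ⊢
    exact ⟨hab.1, hab.2.elim (fun h => Or.inl (hRle _ _ h)) (fun h => Or.inr (hRle _ _ h))⟩
  let φ : (graphOf R).ConnectedComponent → (graphOf Rstar).ConnectedComponent :=
    SimpleGraph.ConnectedComponent.map (SimpleGraph.Hom.ofLE hle2)
  have hφmk : ∀ v, φ ((graphOf R).connectedComponentMk v)
      = (graphOf Rstar).connectedComponentMk v := fun v => rfl
  have hsurj : Function.Surjective φ := by
    intro c
    refine c.ind fun v => ⟨(graphOf R).connectedComponentMk v, hφmk v⟩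
  have : Fintype ((graphOf R).ConnectedComponent) := Fintype.ofFinite _
  have : Fintype ((graphOf Rstar).ConnectedComponent) := Fintype.ofFinite _
  rw [Nat.card_eq_fintype_card, Nat.card_eq_fintype_card]
  refine ⟨Fintype.card_le_of_surjective φ hsurj, ?_⟩
  intro hne
  refine Fintype.card_lt_of_surjective_not_injective φ hsurj ?_
  have hdiff : ∃ j k, R j k ≠ Rstar j k := by
    by_contra h
    push_neg at h
    exact hne (by funext j k; exact h j k)
  obtain ⟨j, k, hjk⟩ := hdiff
  have hRf : R j k = false := by
    cases hR : R j k
    · rfl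
    · exact absurd (hR.trans (hRle j k hR).symm) hjk
  have hSt : Rstar j k = true := by
    cases hS : Rstar j k
    · rw [hRf, hS] at hjk; exact absurd rfl hjk
    · rfl
  have hjk' : j ≠ k := by
    intro h; rw [h, hrefl k] at hRf; exact Bool.noConfusion hRf
  intro hinj
  have heq : φ ((graphOf R).connectedComponentMk j) = φ ((graphOf R).connectedComponentMk k) := by
    rw [hφmk, hφmk]
    exact SimpleGraph.ConnectedComponent.sound
      (SimpleGraph.Adj.reachable (by rw [graphOf, SimpleGraph.fromRel_adj]; exact ⟨hjk', Or.inl hSt⟩))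
  have := hinj heq
  rw [SimpleGraph.ConnectedComponent.eq] at this
  have : R j k = true := reach_entry R hsym hrefl hpow this
  rw [hRf] at this; exact Bool.noConfusion this
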